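/- Consider the SIR⁽ᵏ⁾S model without vaccination. Every stationary state (s̄, ī, r̄₀, …, r̄_{k−1}) with ī > 0 satisfies s̄ + ∑_{j=1}^{k−1} (j/k)·r̄_j = 1/R₀; consequently, if R₀ ≤ 1 there is no stationary state with positive fraction of infectives, i.e. no endemic equilibrium exists. -/
import Mathlib


/-- A stationary state of the SIR⁽ᵏ⁾S model: nonnegative entries summing to 1,
satisfying the stationarity equations. -/
def IsStationarySIRkS (k : ℕ) (β γ μ : ℝ) (c : ℕ → ℝ) (s i : ℝ) (r : ℕ → ℝ) : Prop :=
  0 ≤ s ∧ 0 ≤ i ∧ (∀ j ≤ k - 1, 0 ≤ r j) ∧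
  s + i + ∑ j ∈ Finset.range k, r j = 1 ∧
  μ - β * s * i + c k * r (k - 1) - μ * s = 0 ∧
  β * s * i + β * (∑ j ∈ Finset.Icc 1 (k - 1), ((j : ℝ) / (k : ℝ)) * r j) * i -
    (γ + μ) * i = 0 ∧
  γ * i - (c 1 + μ) * r 0 = 0 ∧
  ∀ j, 1 ≤ j → j ≤ k - 1 →
    c j * r (j - 1) - β * ((j : ℝ) / (k : ℝ)) * r j * i - (c (j + 1) + μ) * r j = 0

/-- Every stationary state of the SIR⁽ᵏ⁾S model with ī > 0 satisfies
s̄ + ∑_{j=1}^{k−1} (j/k)·r̄_j = 1/R₀ with R₀ = β/(γ+μ); consequently, if R₀ ≤ 1 there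
is no endemic equilibrium. -/
theorem sirks_endemic_effective_susceptibility
    (k : ℕ) (hk : 2 ≤ k) (β γ μ : ℝ) (hβ : 0 < β) (hγ : 0 < γ) (hμ : 0 < μ)
    (c : ℕ → ℝ) (hc : ∀ j, 1 ≤ j → j ≤ k → 0 < c j) :
    (∀ (s i : ℝ) (r : ℕ → ℝ), IsStationarySIRkS k β γ μ c s i r → 0 < i →
      s + ∑ j ∈ Finset.Icc 1 (k - 1), ((j : ℝ) / (k : ℝ)) * r j =
        1 / (β / (γ + μ))) ∧
    (β / (γ + μ) ≤ 1 →
      ¬ ∃ (s i : ℝ) (r : ℕ → ℝ), IsStationarySIRkS k β γ μ c s i r ∧ 0 < i) := by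
  have hγμ : 0 < γ + μ := by linarith
  have key : ∀ (s i : ℝ) (r : ℕ → ℝ), IsStationarySIRkS k β γ μ c s i r → 0 < i →
      s + ∑ j ∈ Finset.Icc 1 (k - 1), ((j : ℝ) / (k : ℝ)) * r j = 1 / (β / (γ + μ)) := by
    intro s i r hst hi
    obtain ⟨hs, hi0, hr, hsum, e1, e2, e3, e4⟩ := hst
    set S := ∑ j ∈ Finset.Icc 1 (k - 1), ((j : ℝ) / (k : ℝ)) * r j with hS
    have h2 : (β * (s + S) - (γ + μ)) * i = 0 := by ring_nf; ring_nf at e2; linarith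
    have h3 : β * (s + S) - (γ + μ) = 0 := by
      rcases mul_eq_zero.mp h2 with h | h
      · exact h
      · exact absurd h hi.ne'
    field_simp
    linarith
  refine ⟨key, fun hR ⟨s, i, r, hst, hi⟩ => ?_⟩
  have hkey := key s i r hst hi
  obtain ⟨hs, hi0, hr, hsum, e1, e2, e3, e4⟩ := hst
  have hge : (1:ℝ) ≤ 1 / (β / (γ + μ)) := by
    rw [le_div_iff₀ (by positivity)]
    linarith
  -- bound: Σ (j/k) r j ≤ Σ_{range k} r j
  have hbound : ∑ j ∈ Finset.Icc 1 (k - 1), ((j : ℝ) / (k : ℝ)) * r j ≤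
      ∑ j ∈ Finset.range k, r j := by
    have h1 : ∑ j ∈ Finset.Icc 1 (k - 1), ((j : ℝ) / (k : ℝ)) * r j ≤
        ∑ j ∈ Finset.Icc 1 (k - 1), r j := by
      apply Finset.sum_le_sum
      intro j hj
      simp only [Finset.mem_Icc] at hj
      have hrj := hr j hj.2
      have hjk : (j : ℝ) / (k : ℝ) ≤ 1 := by
        rw [div_le_one (by positivity)]
        exact_mod_cast le_trans hj.2 (Nat.sub_le k 1)
      nlinarith
    refine h1.trans (Finset.sum_le_sum_of_subset_of_nonneg ?_ ?_)
    · intro j hj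
      simp only [Finset.mem_Icc] at hj
      simp only [Finset.mem_range]
      omega
    · intro j hj _
      exact hr j (by simp at hj; omega)
  linarith
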